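/- The piecewise function d(r) equal to mk(1−(m−1)/(2k)) − [mk(1−(m−1)/(2k)) − (m−1)/S]·r for r ∈ [0,1) and equal to (m−r)/S for r ∈ [1,m], where S = ∑_{l=1}^{m} 1/(k−l+1), is continuous at r = 1 and is bounded above by the piecewise linear function d^∞(r) joining the points (l, (m−l)(k−l)) for l = 0,…,m, for all r ∈ [0,m], when k ≥ m ≥ 1. -/

import Mathlib

lemma aux17 (a b t : ℝ) (ha : 1 ≤ a) (hab : 0 ≤ (a - 1) * (a - 2))
    (ht0 : 0 ≤ t) (ht1 : t ≤ 1) :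
    (b - a + 1) * (a - t) ≤ a * b + t * ((a - 1) * (b - 1) - a * b) := by
  nlinarith [mul_nonneg (by linarith : (0:ℝ) ≤ a - 1) (by linarith : (0:ℝ) ≤ 1 - t)]

theorem stmt_17 (m k : ℕ) (hm : 1 ≤ m) (hk : m ≤ k) :
    let S : ℝ := ∑ l ∈ Finset.range m, 1 / ((k : ℝ) - l)
    let d : ℝ → ℝ := fun r =>
      if r < 1 then
        (m : ℝ) * k * (1 - ((m : ℝ) - 1) / (2 * k)) -
          ((m : ℝ) * k * (1 - ((m : ℝ) - 1) / (2 * k)) - ((m : ℝ) - 1) / S) * r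
      else ((m : ℝ) - r) / S
    let dInf : ℝ → ℝ := fun r =>
      let l : ℕ := min (Nat.floor r) (m - 1)
      ((m : ℝ) - l) * ((k : ℝ) - l) +
        (r - l) * ((((m : ℝ) - l - 1) * ((k : ℝ) - l - 1)) - ((m : ℝ) - l) * ((k : ℝ) - l))
    ContinuousAt d 1 ∧ ∀ r ∈ Set.Icc (0 : ℝ) (m : ℝ), d r ≤ dInf r := by
  intro S d dInf
  have hm1 : (1:ℝ) ≤ m := by exact_mod_cast hm
  have hk1 : (m:ℝ) ≤ k := by exact_mod_cast hk
  have hSpos : 0 < S := by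
    apply Finset.sum_pos
    · intro i hi
      have hi' : (i:ℝ) < m := by exact_mod_cast Finset.mem_range.1 hi
      have : (0:ℝ) < (k:ℝ) - i := by linarith
      positivity
    · exact Finset.nonempty_range_iff.2 (by omega)
  have hcast : ((m - 1 : ℕ) : ℝ) = (m:ℝ) - 1 := by
    push_cast [hm]; ring
  have hkm : (0:ℝ) < (k:ℝ) - m + 1 := by linarith
  have hS2 : 1 ≤ S * ((k:ℝ) - m + 1) := by
    have hmem : m - 1 ∈ Finset.range m := Finset.mem_range.2 (by omega)
    have h1 : 1 / ((k:ℝ) - ((m - 1 : ℕ) : ℝ)) ≤ S := by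
      apply Finset.single_le_sum (f := fun l : ℕ => 1 / ((k : ℝ) - l)) _ hmem
      intro i hi
      have hi' : (i:ℝ) < m := by exact_mod_cast Finset.mem_range.1 hi
      have : (0:ℝ) < (k:ℝ) - i := by linarith
      positivity
    rw [hcast] at h1
    have he : (k:ℝ) - ((m:ℝ) - 1) = (k:ℝ) - m + 1 := by ring
    rw [he, div_le_iff₀ hkm] at h1
    exact h1
  constructor
  · -- continuity at 1
    have hd1 : d 1 = ((m:ℝ) - 1) / S := by simp [d]
    rw [ContinuousAt, hd1, ← nhdsLT_sup_nhdsGE (1:ℝ), Filter.tendsto_sup]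
    constructor
    · apply Filter.Tendsto.congr'
        (f₁ := fun r : ℝ => (m : ℝ) * k * (1 - ((m : ℝ) - 1) / (2 * k)) -
          ((m : ℝ) * k * (1 - ((m : ℝ) - 1) / (2 * k)) - ((m : ℝ) - 1) / S) * r)
      · filter_upwards [self_mem_nhdsWithin] with x hx
        have hx' : x < 1 := hx
        simp only [d, if_pos hx']
      · have h : Filter.Tendsto (fun r : ℝ => (m : ℝ) * k * (1 - ((m : ℝ) - 1) / (2 * k)) -
            ((m : ℝ) * k * (1 - ((m : ℝ) - 1) / (2 * k)) - ((m : ℝ) - 1) / S) * r) (nhds 1)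
            (nhds ((m : ℝ) * k * (1 - ((m : ℝ) - 1) / (2 * k)) -
            ((m : ℝ) * k * (1 - ((m : ℝ) - 1) / (2 * k)) - ((m : ℝ) - 1) / S) * 1)) := by
          exact (continuous_const.sub (continuous_const.mul continuous_id)).tendsto 1
        have he : (m : ℝ) * k * (1 - ((m : ℝ) - 1) / (2 * k)) -
            ((m : ℝ) * k * (1 - ((m : ℝ) - 1) / (2 * k)) - ((m : ℝ) - 1) / S) * 1
            = ((m:ℝ) - 1) / S := by ring
        rw [he] at h
        exact h.mono_left nhdsWithin_le_nhds
    · apply Filter.Tendsto.congr' (f₁ := fun r : ℝ => ((m:ℝ) - r) / S)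
      · filter_upwards [self_mem_nhdsWithin] with x hx
        have hx' : ¬ x < 1 := not_lt.2 hx
        simp only [d, if_neg hx']
      · have h : Filter.Tendsto (fun r : ℝ => ((m:ℝ) - r) / S) (nhds 1)
            (nhds (((m:ℝ) - 1) / S)) := by
          exact ((continuous_const.sub continuous_id).div_const S).tendsto 1
        exact h.mono_left nhdsWithin_le_nhds
  · intro r hr
    obtain ⟨hr0, hrm⟩ := hr
    by_cases hr1 : r < 1
    · -- l = 0
      have hfl : Nat.floor r = 0 := Nat.floor_eq_zero.2 hr1
      have hmin : min (Nat.floor r) (m - 1) = 0 := by rw [hfl]; exact Nat.zero_min _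
      simp only [d, dInf, if_pos hr1, hmin, Nat.cast_zero, sub_zero]
      have hB : ((m:ℝ) - 1) / S ≤ ((m:ℝ) - 1) * ((k:ℝ) - 1) := by
        rw [div_le_iff₀ hSpos]
        have h2 : 0 ≤ ((m:ℝ) - 1) * ((m:ℝ) - 2) := by
          rcases Nat.lt_or_ge m 2 with h | h
          · have : m = 1 := by omega
            subst this; norm_num
          · have h2' : (2:ℝ) ≤ m := by exact_mod_cast h
            nlinarith
        nlinarith [mul_le_mul_of_nonneg_left hS2 (by linarith : (0:ℝ) ≤ (m:ℝ) - 1),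
          mul_nonneg hSpos.le h2]
      have hk0 : (0:ℝ) < k := by linarith
      have hA : (m:ℝ) * k * (1 - ((m:ℝ) - 1) / (2 * k)) ≤ (m:ℝ) * k := by
        have hx : 0 ≤ ((m:ℝ) - 1) / (2 * k) := by
          apply div_nonneg <;> linarith
        nlinarith [mul_nonneg (by positivity : (0:ℝ) ≤ (m:ℝ) * k) hx]
      nlinarith [mul_nonneg (by linarith : (0:ℝ) ≤ 1 - r) (sub_nonneg.2 hA),
        mul_nonneg hr0 (sub_nonneg.2 hB)]
    · have hr1' : (1:ℝ) ≤ r := not_lt.1 hr1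
      simp only [d, dInf, if_neg hr1]
      set l := min (Nat.floor r) (m - 1) with hl
      have hlm : l ≤ m - 1 := min_le_right _ _
      have hlr : (l:ℝ) ≤ r := by
        have h1 : (l:ℝ) ≤ (Nat.floor r : ℝ) := by exact_mod_cast min_le_left _ _
        exact h1.trans (Nat.floor_le hr0)
      have hl1 : (l:ℝ) ≤ (m:ℝ) - 1 := by
        rw [← hcast]; exact_mod_cast hlm
      have ht0 : 0 ≤ r - l := by linarith
      have ht1 : r - l ≤ 1 := by
        rcases le_or_gt (Nat.floor r) (m - 1) with h | h
        · have hle : l = Nat.floor r := min_eq_left h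
          rw [hle]
          have := Nat.lt_floor_add_one r
          linarith
        · have hlf : l = m - 1 := min_eq_right h.le
          have hmf : m ≤ Nat.floor r := by omega
          have : (m:ℝ) ≤ (Nat.floor r : ℝ) := by exact_mod_cast hmf
          have hmr : (m:ℝ) ≤ r := this.trans (Nat.floor_le hr0)
          rw [hlf, hcast]
          linarith
      have hab : 0 ≤ ((m:ℝ) - l - 1) * ((m:ℝ) - l - 2) := by
        rcases Nat.lt_or_ge (l + 1) m with h | h
        · have h' : l + 2 ≤ m := h
          have h2 : ((l:ℝ) + 2) ≤ (m:ℝ) := by exact_mod_cast h'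
          nlinarith
        · have hle : l + 1 = m := by omega
          have h2 : (l:ℝ) + 1 = (m:ℝ) := by exact_mod_cast hle
          have h3 : (m:ℝ) - (l:ℝ) - 1 = 0 := by linarith
          rw [h3, zero_mul]
      have key := aux17 ((m:ℝ) - l) ((k:ℝ) - l) (r - l)
        (by linarith) hab ht0 ht1
      have h1 : ((m:ℝ) - r) / S ≤ ((k:ℝ) - m + 1) * ((m:ℝ) - r) := by
        rw [div_le_iff₀ hSpos]
        have hmr : 0 ≤ (m:ℝ) - r := by linarith
        nlinarith [mul_le_mul_of_nonneg_left hS2 hmr]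
      exact h1.trans (by linarith [key])
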